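/- arXiv:1411.6296 — 4 statements merged into one kernel-verified Lean document; each statement's English description precedes it below -/
import Mathlib

section
/- Let A ∈ ℝ^{n²×n²} be PS-symmetric and define à ∈ ℝ^{n²×n²} by Ã(i₂+(j₂−1)n, i₁+(j₁−1)n) = A(i₁+(i₂−1)n, j₁+(j₂−1)n) for all 1 ≤ i₁,i₂,j₁,j₂ ≤ n. Then à is PS-symmetric: Ã = Ãᵀ and à = Π à Π. -/
open Matrix

/-- The perfect shuffle permutation matrix `Π_{n,n}` on `ℝ^{n²}`, where the index
`i+(j-1)n` of `ℝ^{n²}` is encoded as the pair `(i,j) : Fin n × Fin n`.  It is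
determined by `Π e_{(i,j)} = e_{(j,i)}`, i.e. `Π e_{i+(j−1)n} = e_{j+(i−1)n}`. -/
def perfectShuffle (n : ℕ) : Matrix (Fin n × Fin n) (Fin n × Fin n) ℝ :=
  Matrix.of fun p q => if p.1 = q.2 ∧ p.2 = q.1 then 1 else 0

lemma perfectShuffle_conj (n : ℕ) (A : Matrix (Fin n × Fin n) (Fin n × Fin n) ℝ)
    (p q : Fin n × Fin n) :
    (perfectShuffle n * A * perfectShuffle n) p q = A (p.2, p.1) (q.2, q.1) := by
  simp only [Matrix.mul_apply, perfectShuffle, Matrix.of_apply]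
  rw [Finset.sum_eq_single ((q.2, q.1) : Fin n × Fin n)]
  · rw [Finset.sum_eq_single ((p.2, p.1) : Fin n × Fin n)]
    · simp
    · intro b _ hb
      rw [if_neg, zero_mul]
      rintro ⟨h1, h2⟩
      exact hb (Prod.ext h2.symm h1.symm)
    · simp
  · intro b _ hb
    rw [if_neg, mul_zero]
    rintro ⟨h1, h2⟩
    exact hb (Prod.ext h1 h2)
  · simp

/-- if `A` is PS-symmetric and `Ã` is its rearrangement
`Ã(i₂+(j₂−1)n, i₁+(j₁−1)n) = A(i₁+(i₂−1)n, j₁+(j₂−1)n)`, then `Ã` is also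
PS-symmetric. -/
theorem rearrangement_psSymmetric (n : ℕ) (hn : 0 < n)
    (A At : Matrix (Fin n × Fin n) (Fin n × Fin n) ℝ)
    (hsym : A = Aᵀ) (hps : A = perfectShuffle n * A * perfectShuffle n)
    (hAt : ∀ i₁ i₂ j₁ j₂ : Fin n, At (i₂, j₂) (i₁, j₁) = A (i₁, i₂) (j₁, j₂)) :
    At = Atᵀ ∧ At = perfectShuffle n * At * perfectShuffle n := by
  have hA : ∀ i j k l : Fin n, A (i, j) (k, l) = A (j, i) (l, k) := by
    intro i j k l
    conv_lhs => rw [hps]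
    exact perfectShuffle_conj n A (i, j) (k, l)
  have hAs : ∀ i j k l : Fin n, A (i, j) (k, l) = A (k, l) (i, j) := by
    intro i j k l
    conv_lhs => rw [hsym]
    rfl
  constructor
  · ext ⟨i₂, j₂⟩ ⟨i₁, j₁⟩
    rw [Matrix.transpose_apply, hAt, hAt, hA]
  · ext ⟨i₂, j₂⟩ ⟨i₁, j₁⟩
    rw [perfectShuffle_conj, hAt, hAt, hAs, ← hA]
end

section
/- If A ∈ ℝ^{n²×n²} is PS-symmetric and positive semidefinite, then there exist matrices Y₊ ∈ ℝ^{n²×(n(n+1)/2)} and Y₋ ∈ ℝ^{n²×(n(n−1)/2)} such that Π Y₊ = Y₊, Π Y₋ = −Y₋, and A = Y₊Y₊ᵀ + Y₋Y₋ᵀ. In particular, A is a sum of rank-one matrices y yᵀ each of which is itself PS-symmetric. -/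
open Matrix

namespace PSaux
variable {n : ℕ}

lemma ps_apply (p q : Fin n × Fin n) :
    perfectShuffle n p q = if q = p.swap then 1 else 0 := by
  simp only [perfectShuffle, of_apply]
  congr 1
  simp [Prod.ext_iff, eq_comm, and_comm]

lemma ps_mul {m : Type*} [Fintype m] (M : Matrix (Fin n × Fin n) m ℝ)
    (p : Fin n × Fin n) (k : m) :
    (perfectShuffle n * M) p k = M p.swap k := by
  simp [mul_apply, ps_apply]

lemma mul_ps {m : Type*} [Fintype m] (M : Matrix m (Fin n × Fin n) ℝ)
    (k : m) (q : Fin n × Fin n) :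
    (M * perfectShuffle n) k q = M k q.swap := by
  have : ∀ r : Fin n × Fin n, perfectShuffle n r q = if r = q.swap then 1 else 0 := by
    intro r; rw [ps_apply]; congr 1; rw [eq_iff_iff]; constructor <;> (intro h; simp [h])
  simp [mul_apply, this]

lemma ps_mul_ps : perfectShuffle n * perfectShuffle n = 1 := by
  ext p q
  rw [mul_ps, ps_apply, one_apply]
  congr 1
  rw [eq_iff_iff]
  constructor <;> (intro h; exact (Prod.swap_injective (by simpa using congrArg Prod.swap h)).symm ▸ rfl)


noncomputable def Ep (n : ℕ) : Matrix (Fin n × Fin n) {p : Fin n × Fin n // p.1 ≤ p.2} ℝ :=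
  Matrix.of fun p s =>
    if s.val.1 = s.val.2 then (if p = s.val then 1 else 0)
    else if p = s.val ∨ p = s.val.swap then (Real.sqrt 2)⁻¹ else 0

noncomputable def Em (n : ℕ) : Matrix (Fin n × Fin n) {p : Fin n × Fin n // p.1 < p.2} ℝ :=
  Matrix.of fun p s =>
    if p = s.val then (Real.sqrt 2)⁻¹ else if p = s.val.swap then -(Real.sqrt 2)⁻¹ else 0

lemma swap_eq_iff {p q : Fin n × Fin n} : p.swap = q ↔ p = q.swap := by
  constructor <;> (rintro rfl; simp)

lemma Ep_swap (p : Fin n × Fin n) (s) : Ep n p.swap s = Ep n p s := by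
  obtain ⟨⟨i, j⟩, hij⟩ := s
  simp only [Ep, of_apply]
  by_cases h : i = j
  · subst h
    simp only [if_pos rfl, swap_eq_iff, Prod.swap_prod_mk]
  · simp only [if_neg h, swap_eq_iff, Prod.swap_prod_mk]
    exact if_congr or_comm rfl rfl

end PSaux

namespace PSaux
variable {n : ℕ}

lemma Em_swap (p : Fin n × Fin n) (s) : Em n p.swap s = -Em n p s := by
  obtain ⟨⟨i, j⟩, hij⟩ := s
  have hne : i ≠ j := ne_of_lt hij
  simp only [Em, of_apply, swap_eq_iff, Prod.swap_prod_mk]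
  by_cases h1 : p = (i, j)
  · subst h1
    rw [if_neg (fun he => hne (congrArg Prod.fst he)), if_pos rfl, if_pos rfl]
  · by_cases h2 : p = (j, i)
    · subst h2
      rw [if_pos rfl, if_neg h1, if_pos rfl]
      ring
    · rw [if_neg h2, if_neg h1, if_neg h1, if_neg h2]; ring

/-- where the column of `p` lives -/
def srt (p : Fin n × Fin n) : {p : Fin n × Fin n // p.1 ≤ p.2} :=
  if h : p.1 ≤ p.2 then ⟨p, h⟩ else ⟨p.swap, le_of_lt (lt_of_not_ge h)⟩

lemma Ep_eq_zero {p : Fin n × Fin n} {s} (hs : s ≠ srt p) : Ep n p s = 0 := by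
  obtain ⟨⟨i, j⟩, hij⟩ := s
  simp only [Ep, of_apply]
  by_cases h : i = j
  · subst h
    rw [if_pos rfl, if_neg]
    rintro rfl
    exact hs (by simp [srt, dif_pos hij])
  · rw [if_neg h, if_neg]
    rintro (rfl | rfl)
    · exact hs (by simp [srt, dif_pos hij])
    · refine hs ?_
      have hji : ¬ (j ≤ i) := not_le.mpr (lt_of_le_of_ne hij h)
      simp [srt, hji]

lemma Em_eq_zero {p : Fin n × Fin n} {s : {p : Fin n × Fin n // p.1 < p.2}}
    (hs : s.val ≠ p ∧ s.val ≠ p.swap) : Em n p s = 0 := by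
  obtain ⟨⟨i, j⟩, hij⟩ := s
  simp only [Em, of_apply]
  rw [if_neg (by rintro rfl; exact hs.1 rfl), if_neg]
  rintro rfl
  exact hs.2 (by simp)

end PSaux

namespace PSaux
variable {n : ℕ}

lemma srt_val (p : Fin n × Fin n) : (srt p).val = p ∨ (srt p).val = p.swap := by
  unfold srt; split <;> simp

lemma sqrt_two_inv_sq : (Real.sqrt 2)⁻¹ * (Real.sqrt 2)⁻¹ = 2⁻¹ := by
  rw [← mul_inv, Real.mul_self_sqrt (by norm_num)]

lemma Ep_self (p : Fin n × Fin n) :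
    Ep n p (srt p) = if p.1 = p.2 then 1 else (Real.sqrt 2)⁻¹ := by
  by_cases h : p.1 ≤ p.2
  · rw [srt, dif_pos h]
    simp only [Ep, of_apply]
    split <;> simp
  · rw [srt, dif_neg h]
    have h2 : p.2 < p.1 := lt_of_not_ge h
    have hne : ¬ (p.swap.1 = p.swap.2) := by
      simp only [Prod.fst_swap, Prod.snd_swap]; exact ne_of_lt h2
    simp only [Ep, of_apply, if_neg hne, Prod.swap_swap]
    rw [if_pos (Or.inr trivial), if_neg (ne_of_gt h2)]

lemma Ep_other {p q : Fin n × Fin n} (h1 : q ≠ p) (h2 : q ≠ p.swap) :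
    Ep n q (srt p) = 0 := by
  apply Ep_eq_zero
  intro he
  rcases srt_val p with hv | hv <;> rcases srt_val q with hv' | hv' <;>
    rw [← he, hv] at hv'
  · exact h1 hv'.symm
  · exact h2 (by simpa using congrArg Prod.swap hv'.symm)
  · exact h2 hv'.symm
  · exact h1 (by simpa using congrArg Prod.swap hv'.symm)

lemma EpEpT : Ep n * (Ep n)ᵀ = (2:ℝ)⁻¹ • (1 + perfectShuffle n) := by
  ext p q
  have hsum : (Ep n * (Ep n)ᵀ) p q = Ep n p (srt p) * Ep n q (srt p) := by
    rw [mul_apply]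
    exact Finset.sum_eq_single (srt p)
      (fun s _ hs => by rw [transpose_apply, Ep_eq_zero hs, zero_mul])
      (by simp)
  rw [hsum, Matrix.smul_apply, Matrix.add_apply, one_apply, ps_apply, smul_eq_mul]
  by_cases hq : q = p
  · subst hq
    rw [Ep_self, if_pos rfl]
    by_cases hd : q.1 = q.2
    · have hqs : q = q.swap := by
        rw [Prod.ext_iff]; constructor <;> simp [hd]
      rw [if_pos hd, if_pos hqs]; norm_num
    · have hqs : ¬ q = q.swap := fun hc => hd (congrArg Prod.fst hc)
      rw [if_neg hd, if_neg hqs, sqrt_two_inv_sq]; ring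
  · by_cases hq2 : q = p.swap
    · have hd : ¬ (p.1 = p.2) := by
        intro hd
        refine hq (hq2.trans ?_)
        rw [Prod.ext_iff]; constructor <;> simp [hd]
      subst hq2
      rw [Ep_swap, Ep_self, if_neg hd, if_neg (fun hc : p = p.swap => hq hc.symm),
        if_pos rfl, sqrt_two_inv_sq]
      ring
    · rw [Ep_other hq hq2, if_neg (fun hc : p = q => hq hc.symm), if_neg hq2]; ring

def srtm (p : Fin n × Fin n) (h : ¬ p.1 = p.2) : {p : Fin n × Fin n // p.1 < p.2} :=
  if h2 : p.1 < p.2 then ⟨p, h2⟩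
  else ⟨p.swap, lt_of_le_of_ne (le_of_not_gt h2) (Ne.symm (by simpa using h))⟩

lemma srtm_val (p : Fin n × Fin n) (h : ¬ p.1 = p.2) :
    (srtm p h).val = p ∨ (srtm p h).val = p.swap := by
  unfold srtm; split <;> simp

lemma Em_self (p : Fin n × Fin n) (h : ¬ p.1 = p.2) :
    Em n p (srtm p h) = if p.1 < p.2 then (Real.sqrt 2)⁻¹ else -(Real.sqrt 2)⁻¹ := by
  by_cases h2 : p.1 < p.2
  · rw [srtm, dif_pos h2]
    simp [Em, h2]
  · rw [srtm, dif_neg h2]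
    have hns : ¬ p = p.swap := fun hc => h (congrArg Prod.fst hc)
    simp [Em, hns, h2]

lemma Em_other {p q : Fin n × Fin n} (h : ¬ p.1 = p.2) (h1 : q ≠ p) (h2 : q ≠ p.swap) :
    Em n q (srtm p h) = 0 := by
  apply Em_eq_zero
  rcases srtm_val p h with hv | hv <;> rw [hv]
  · exact ⟨fun hc => h1 hc.symm, fun hc => h2 (by simpa using congrArg Prod.swap hc.symm)⟩
  · exact ⟨fun hc => h2 hc.symm, fun hc => h1 (by simpa using congrArg Prod.swap hc.symm)⟩

lemma Em_zero_of_diag {p : Fin n × Fin n} (h : p.1 = p.2) (s) : Em n p s = 0 := by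
  have hps : p.swap = p := by rw [Prod.ext_iff]; constructor <;> simp [h]
  apply Em_eq_zero
  refine ⟨fun hc => ?_, fun hc => ?_⟩
  · exact absurd (hc ▸ h) (ne_of_lt s.2)
  · rw [hps] at hc; exact absurd (hc ▸ h) (ne_of_lt s.2)

lemma EmEmT : Em n * (Em n)ᵀ = (2:ℝ)⁻¹ • (1 - perfectShuffle n) := by
  ext p q
  rw [Matrix.smul_apply, Matrix.sub_apply, one_apply, ps_apply, smul_eq_mul]
  by_cases hd : p.1 = p.2
  · have hps : p.swap = p := by rw [Prod.ext_iff]; constructor <;> simp [hd]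
    have : (Em n * (Em n)ᵀ) p q = 0 := by
      rw [mul_apply]
      exact Finset.sum_eq_zero fun s _ => by
        rw [Em_zero_of_diag hd s, zero_mul]
    rw [this, hps]
    by_cases hq : p = q
    · simp [hq]
    · simp [hq, show ¬ q = p from fun hc => hq hc.symm]
  · have hzero : ∀ s, s ≠ srtm p hd → Em n p s = 0 := by
      intro s hs
      apply Em_eq_zero
      constructor
      · rintro rfl
        exact hs (by rw [srtm, dif_pos s.2])
      · intro hc
        have h2 : ¬ p.1 < p.2 := by
          have := s.2; rw [hc] at this; simp only [Prod.fst_swap, Prod.snd_swap] at this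
          exact fun hlt => absurd rfl (ne_of_lt (lt_trans this hlt))
        refine hs ?_
        rw [srtm, dif_neg h2]
        exact Subtype.ext hc
    have hsum : (Em n * (Em n)ᵀ) p q = Em n p (srtm p hd) * Em n q (srtm p hd) := by
      rw [mul_apply]
      exact Finset.sum_eq_single (srtm p hd)
        (fun s _ hs => by rw [transpose_apply, hzero s hs, zero_mul]) (by simp)
    rw [hsum]
    by_cases hq : q = p
    · subst hq
      have hqs : ¬ q = q.swap := fun hc => hd (congrArg Prod.fst hc)
      rw [Em_self, if_pos rfl, if_neg hqs]
      rcases lt_or_ge q.1 q.2 with h2 | h2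
      · rw [if_pos h2, sqrt_two_inv_sq]; ring
      · rw [if_neg (not_lt.mpr h2), neg_mul_neg, sqrt_two_inv_sq]; ring
    · by_cases hq2 : q = p.swap
      · subst hq2
        rw [Em_swap, Em_self, if_neg (fun hc : p = p.swap => hq hc.symm), if_pos rfl]
        rcases lt_or_ge p.1 p.2 with h2 | h2
        · rw [if_pos h2, mul_neg, sqrt_two_inv_sq]; ring
        · rw [if_neg (not_lt.mpr h2), mul_neg, neg_mul_neg, sqrt_two_inv_sq]; ring
      · rw [Em_other hd hq hq2, if_neg (fun hc : p = q => hq hc.symm), if_neg hq2]; ring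
end PSaux

namespace PSaux
variable {n : ℕ}

lemma ps_mul_Ep : perfectShuffle n * Ep n = Ep n := by
  ext p s; rw [ps_mul, Ep_swap]

lemma ps_mul_Em : perfectShuffle n * Em n = -(Em n) := by
  ext p s; rw [ps_mul, Em_swap, neg_apply]

lemma card_le : Fintype.card {p : Fin n × Fin n // p.1 ≤ p.2} = n * (n + 1) / 2 := by
  rw [← Fintype.card_congr (Sym2.sortEquiv (α := Fin n)), Sym2.card, Fintype.card_fin,
    Nat.choose_two_right]
  simp [Nat.succ_sub_one, Nat.mul_comm]

lemma card_diag : Fintype.card {p : Fin n × Fin n // p.1 = p.2} = n := by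
  have e : {p : Fin n × Fin n // p.1 = p.2} ≃ Fin n :=
    { toFun := fun s => s.val.1
      invFun := fun a => ⟨(a, a), rfl⟩
      left_inv := fun s => by obtain ⟨⟨a, b⟩, h⟩ := s; cases h; rfl
      right_inv := fun a => rfl }
  rw [Fintype.card_congr e, Fintype.card_fin]

lemma card_lt : Fintype.card {p : Fin n × Fin n // p.1 < p.2} = n * (n - 1) / 2 := by
  have hd : Disjoint (fun p : Fin n × Fin n => p.1 < p.2) (fun p => p.1 = p.2) := by
    refine fun f hf1 hf2 => ?_
    intro x hx
    exact absurd (hf2 x hx) (ne_of_lt (hf1 x hx))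
  have h1 : Fintype.card {p : Fin n × Fin n // p.1 ≤ p.2} =
      Fintype.card {p : Fin n × Fin n // p.1 < p.2} + n := by
    rw [Fintype.card_congr (Equiv.subtypeEquivRight
      (fun x : Fin n × Fin n => (le_iff_lt_or_eq : x.1 ≤ x.2 ↔ _))),
      Fintype.card_subtype_or_disjoint _ _ hd, card_diag]
  rw [card_le] at h1
  rcases Nat.eq_zero_or_pos n with rfl | hn
  · simpa using h1
  · obtain ⟨m, rfl⟩ := Nat.exists_eq_add_of_le hn
    have hev1 : 2 ∣ (1 + m) * (1 + m + 1) := (Nat.even_mul_succ_self (1 + m)).two_dvd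
    have hev2 : 2 ∣ (1 + m) * (1 + m - 1) := by
      have h := (Nat.even_mul_succ_self m).two_dvd
      simpa [Nat.mul_comm, Nat.add_comm] using h
    have h2 := Nat.mul_div_cancel' hev1
    have h3 := Nat.mul_div_cancel' hev2
    have hr : (1 + m) * (1 + m + 1) = (1 + m) * (1 + m - 1) + 2 * (1 + m) := by
      simp [Nat.succ_sub_one]; ring
    generalize hA : Fintype.card {p : Fin (1+m) × Fin (1+m) // p.1 < p.2} = a at h1
    generalize (1 + m) * (1 + m + 1) = X at h1 h2 hr
    generalize (1 + m) * (1 + m - 1) = Y at h3 hr ⊢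
    omega

end PSaux

namespace PSaux
variable {n : ℕ}

lemma submatrix_gram {β γ : Type*} [Fintype β] [Fintype γ] [DecidableEq β] [DecidableEq γ]
    (M : Matrix (Fin n × Fin n) β ℝ) (e : γ ≃ β) :
    (M.submatrix id e) * (M.submatrix id e)ᵀ = M * Mᵀ := by
  ext p q
  rw [mul_apply, mul_apply]
  exact Equiv.sum_comp e (fun s => M p s * Mᵀ s q)

lemma mul_submatrix {β γ : Type*} [Fintype β] [Fintype γ]
    (Q : Matrix (Fin n × Fin n) (Fin n × Fin n) ℝ) (M : Matrix (Fin n × Fin n) β ℝ)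
    (e : γ → β) :
    Q * (M.submatrix id e) = (Q * M).submatrix id e := by
  ext p k
  rw [mul_apply, submatrix_apply, mul_apply]
  rfl

end PSaux


open PSaux in
/-- a positive semidefinite PS-symmetric `A` can be written as
`A = Y₊Y₊ᵀ + Y₋Y₋ᵀ` with `Π Y₊ = Y₊` (n(n+1)/2 columns) and `Π Y₋ = −Y₋`
(n(n−1)/2 columns); in particular `A` is the sum of the rank-one matrices
`y yᵀ` built from the columns `y` of `Y₊` and `Y₋`, each of which is itself
PS-symmetric. -/
theorem psSymmetric_posSemidef_structured_factorization (n : ℕ) (hn : 0 < n)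
    (A : Matrix (Fin n × Fin n) (Fin n × Fin n) ℝ)
    (hps : A = perfectShuffle n * A * perfectShuffle n)
    (hpsd : A.PosSemidef) :
    ∃ (Yp : Matrix (Fin n × Fin n) (Fin (n * (n + 1) / 2)) ℝ)
      (Ym : Matrix (Fin n × Fin n) (Fin (n * (n - 1) / 2)) ℝ),
      perfectShuffle n * Yp = Yp ∧
      perfectShuffle n * Ym = -Ym ∧
      A = Yp * Ypᵀ + Ym * Ymᵀ ∧
      (∀ j, (vecMulVec (Ypᵀ j) (Ypᵀ j))ᵀ = vecMulVec (Ypᵀ j) (Ypᵀ j) ∧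
        vecMulVec (Ypᵀ j) (Ypᵀ j) =
          perfectShuffle n * vecMulVec (Ypᵀ j) (Ypᵀ j) * perfectShuffle n) ∧
      (∀ j, (vecMulVec (Ymᵀ j) (Ymᵀ j))ᵀ = vecMulVec (Ymᵀ j) (Ymᵀ j) ∧
        vecMulVec (Ymᵀ j) (Ymᵀ j) =
          perfectShuffle n * vecMulVec (Ymᵀ j) (Ymᵀ j) * perfectShuffle n) := by
  classical
  set P := perfectShuffle n with hPdef
  -- reindexed isometries
  let ep : {p : Fin n × Fin n // p.1 ≤ p.2} ≃ Fin (n * (n + 1) / 2) :=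
    Fintype.equivFinOfCardEq card_le
  let em : {p : Fin n × Fin n // p.1 < p.2} ≃ Fin (n * (n - 1) / 2) :=
    Fintype.equivFinOfCardEq card_lt
  let E1 : Matrix (Fin n × Fin n) (Fin (n * (n + 1) / 2)) ℝ := (Ep n).submatrix id ep.symm
  let E2 : Matrix (Fin n × Fin n) (Fin (n * (n - 1) / 2)) ℝ := (Em n).submatrix id em.symm
  have hE1gram : E1 * E1ᵀ = (2:ℝ)⁻¹ • (1 + P) := by
    rw [show E1 * E1ᵀ = Ep n * (Ep n)ᵀ from submatrix_gram _ _, EpEpT]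
  have hE2gram : E2 * E2ᵀ = (2:ℝ)⁻¹ • (1 - P) := by
    rw [show E2 * E2ᵀ = Em n * (Em n)ᵀ from submatrix_gram _ _, EmEmT]
  have hPE1 : P * E1 = E1 := by
    rw [show P * E1 = (P * Ep n).submatrix id ep.symm from mul_submatrix _ _ _, ps_mul_Ep]
  have hPE2 : P * E2 = -E2 := by
    rw [show P * E2 = (P * Em n).submatrix id em.symm from mul_submatrix _ _ _, ps_mul_Em]
    rfl
  -- square roots
  have h1 : (E1ᴴ * A * E1).PosSemidef := hpsd.conjTranspose_mul_mul_same E1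
  have h2 : (E2ᴴ * A * E2).PosSemidef := hpsd.conjTranspose_mul_mul_same E2
  obtain ⟨S1, hS1⟩ : ∃ S : Matrix (Fin (n * (n + 1) / 2)) (Fin (n * (n + 1) / 2)) ℝ,
      S * Sᵀ = E1ᵀ * A * E1 := by
    open scoped MatrixOrder in
    exact ⟨CFC.sqrt (E1ᴴ * A * E1), by
      rw [← conjTranspose_eq_transpose_of_trivial (CFC.sqrt (E1ᴴ * A * E1)),
        (CFC.sqrt_nonneg (E1ᴴ * A * E1)).posSemidef.1,
        CFC.sqrt_mul_sqrt_self _ h1.nonneg, conjTranspose_eq_transpose_of_trivial]⟩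
  obtain ⟨S2, hS2⟩ : ∃ S : Matrix (Fin (n * (n - 1) / 2)) (Fin (n * (n - 1) / 2)) ℝ,
      S * Sᵀ = E2ᵀ * A * E2 := by
    open scoped MatrixOrder in
    exact ⟨CFC.sqrt (E2ᴴ * A * E2), by
      rw [← conjTranspose_eq_transpose_of_trivial (CFC.sqrt (E2ᴴ * A * E2)),
        (CFC.sqrt_nonneg (E2ᴴ * A * E2)).posSemidef.1,
        CFC.sqrt_mul_sqrt_self _ h2.nonneg, conjTranspose_eq_transpose_of_trivial]⟩
  refine ⟨E1 * S1, E2 * S2, ?_, ?_, ?_, ?_, ?_⟩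
  · rw [← Matrix.mul_assoc, hPE1]
  · rw [← Matrix.mul_assoc, hPE2, Matrix.neg_mul]
  · have hexp1 : (E1 * S1) * (E1 * S1)ᵀ = (E1 * E1ᵀ) * A * (E1 * E1ᵀ) := by
      rw [Matrix.transpose_mul]
      calc E1 * S1 * (S1ᵀ * E1ᵀ)
          = E1 * (S1 * S1ᵀ) * E1ᵀ := by simp only [Matrix.mul_assoc]
        _ = E1 * (E1ᵀ * A * E1) * E1ᵀ := by rw [hS1]
        _ = (E1 * E1ᵀ) * A * (E1 * E1ᵀ) := by simp only [Matrix.mul_assoc]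
    have hexp2 : (E2 * S2) * (E2 * S2)ᵀ = (E2 * E2ᵀ) * A * (E2 * E2ᵀ) := by
      rw [Matrix.transpose_mul]
      calc E2 * S2 * (S2ᵀ * E2ᵀ)
          = E2 * (S2 * S2ᵀ) * E2ᵀ := by simp only [Matrix.mul_assoc]
        _ = E2 * (E2ᵀ * A * E2) * E2ᵀ := by rw [hS2]
        _ = (E2 * E2ᵀ) * A * (E2 * E2ᵀ) := by simp only [Matrix.mul_assoc]
    rw [hexp1, hexp2, hE1gram, hE2gram]
    have hPAP : P * A * P = A := hps.symm
    have expand : (1 + P) * A * (1 + P) + (1 - P) * A * (1 - P)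
        = A + A + (P * A * P + P * A * P) := by noncomm_ring
    have hsc : ∀ M N : Matrix (Fin n × Fin n) (Fin n × Fin n) ℝ,
        ((2:ℝ)⁻¹ • M) * A * ((2:ℝ)⁻¹ • N) = ((4:ℝ)⁻¹) • (M * A * N) := by
      intro M N
      rw [Matrix.smul_mul, Matrix.smul_mul, Matrix.mul_smul, smul_smul]
      norm_num
    rw [hsc, hsc, ← smul_add, expand, hPAP]
    match_scalars <;> ring
  · intro j
    have hcol : ∀ p : Fin n × Fin n, (E1 * S1) p.swap j = (E1 * S1) p j := by
      intro p
      have h := congrFun (congrFun (show P * (E1 * S1) = E1 * S1 by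
        rw [← Matrix.mul_assoc, hPE1]) p) j
      rw [ps_mul] at h
      exact h
    constructor
    · ext a b
      simp [vecMulVec_apply, mul_comm]
    · ext p q
      rw [mul_ps, ps_mul, vecMulVec_apply, vecMulVec_apply]
      simp only [transpose_apply]
      rw [hcol p, hcol q]
  · intro j
    have hcol : ∀ p : Fin n × Fin n, (E2 * S2) p.swap j = -((E2 * S2) p j) := by
      intro p
      have h := congrFun (congrFun (show P * (E2 * S2) = -(E2 * S2) by
        rw [← Matrix.mul_assoc, hPE2, Matrix.neg_mul]) p) j
      rw [ps_mul] at h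
      exact h
    constructor
    · ext a b
      simp [vecMulVec_apply, mul_comm]
    · ext p q
      rw [mul_ps, ps_mul, vecMulVec_apply, vecMulVec_apply]
      simp only [transpose_apply]
      rw [hcol p, hcol q]
      ring
end

section
/- Every PS-symmetric matrix A ∈ ℝ^{n²×n²} has a structured spectral decomposition: there exists an orthonormal basis v₁,…,v_{n²} of ℝ^{n²} consisting of eigenvectors of A such that each basis vector v_k satisfies either Π v_k = v_k or Π v_k = −v_k; moreover exactly n(n+1)/2 of them satisfy Π v_k = v_k and exactly n(n−1)/2 satisfy Π v_k = −v_k. -/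
open Matrix

lemma ps_cond {n : ℕ} (p q : Fin n × Fin n) :
    (p.1 = q.2 ∧ p.2 = q.1) ↔ q = (p.2, p.1) := by
  constructor
  · rintro ⟨h1, h2⟩; exact Prod.ext h2.symm h1.symm
  · rintro rfl; exact ⟨rfl, rfl⟩

lemma ps_mulVec {n : ℕ} (x : Fin n × Fin n → ℝ) :
    perfectShuffle n *ᵥ x = fun p => x (p.2, p.1) := by
  funext p
  simp only [perfectShuffle, Matrix.mulVec, dotProduct, Matrix.of_apply, ps_cond,
    ite_mul, one_mul, zero_mul]
  simp [Finset.sum_ite_eq' Finset.univ ((p.2, p.1) : Fin n × Fin n) x]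

lemma ps_transpose {n : ℕ} : (perfectShuffle n)ᵀ = perfectShuffle n := by
  ext p q
  simp only [perfectShuffle, Matrix.transpose_apply, Matrix.of_apply]
  congr 1
  simp only [eq_iff_iff]
  constructor
  · rintro ⟨h1, h2⟩; exact ⟨h2.symm, h1.symm⟩
  · rintro ⟨h1, h2⟩; exact ⟨h2.symm, h1.symm⟩

lemma ps_mul_ps {n : ℕ} : perfectShuffle n * perfectShuffle n = 1 := by
  ext p q
  simp only [Matrix.mul_apply]
  simp only [perfectShuffle, Matrix.of_apply, ps_cond, ite_mul, one_mul, zero_mul]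
  rw [Finset.sum_ite_eq' Finset.univ ((p.2, p.1) : Fin n × Fin n)]
  simp [Matrix.one_apply, Prod.ext_iff, and_comm, eq_comm]

lemma ps_trace {n : ℕ} : Matrix.trace (perfectShuffle n) = n := by
  simp only [Matrix.trace, Matrix.diag, perfectShuffle, Matrix.of_apply]
  rw [Fintype.sum_prod_type]
  simp [eq_comm]

set_option maxHeartbeats 1600000 in
/-- every PS-symmetric `A` has a structured spectral decomposition:
an orthonormal basis `v_k` of `ℝ^{n²}` of eigenvectors of `A` such that each
`v_k` satisfies `Π v_k = v_k` or `Π v_k = −v_k`, with exactly `n(n+1)/2` of the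
former and exactly `n(n−1)/2` of the latter. -/
theorem psSymmetric_structured_spectral_decomposition (n : ℕ) (hn : 0 < n)
    (A : Matrix (Fin n × Fin n) (Fin n × Fin n) ℝ)
    (hsym : A = Aᵀ) (hps : A = perfectShuffle n * A * perfectShuffle n) :
    ∃ v : (Fin n × Fin n) → (Fin n × Fin n → ℝ),
      (∀ k l, v k ⬝ᵥ v l = if k = l then 1 else 0) ∧
      Submodule.span ℝ (Set.range v) = ⊤ ∧
      (∀ k, ∃ μ : ℝ, A *ᵥ v k = μ • v k) ∧
      (∀ k, perfectShuffle n *ᵥ v k = v k ∨ perfectShuffle n *ᵥ v k = -(v k)) ∧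
      Nat.card {k : Fin n × Fin n // perfectShuffle n *ᵥ v k = v k} =
        n * (n + 1) / 2 ∧
      Nat.card {k : Fin n × Fin n // perfectShuffle n *ᵥ v k = -(v k)} =
        n * (n - 1) / 2 := by
  classical
  -- Matrix-level facts
  have hAH : A.IsHermitian := by
    have h : Aᴴ = Aᵀ := by ext p q; simp [Matrix.conjTranspose_apply]
    rw [Matrix.IsHermitian, h, ← hsym]
  have hPH : (perfectShuffle n).IsHermitian := by
    have h : (perfectShuffle n)ᴴ = (perfectShuffle n)ᵀ := by
      ext p q; simp [Matrix.conjTranspose_apply]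
    rw [Matrix.IsHermitian, h, ps_transpose]
  have hMcomm : perfectShuffle n * A = A * perfectShuffle n := by
    conv_lhs => rw [hps]
    rw [← Matrix.mul_assoc, ← Matrix.mul_assoc, ps_mul_ps, Matrix.one_mul]
  set T := Matrix.toEuclideanLin A with hTdef
  set Pl := Matrix.toEuclideanLin (perfectShuffle n) with hPldef
  have hT : T.IsSymmetric := Matrix.isHermitian_iff_isSymmetric.mp hAH
  have hPsym : Pl.IsSymmetric := Matrix.isHermitian_iff_isSymmetric.mp hPH
  have hmul : ∀ M N : Matrix (Fin n × Fin n) (Fin n × Fin n) ℝ,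
      Matrix.toEuclideanLin (M * N) =
        (Matrix.toEuclideanLin M) ∘ₗ (Matrix.toEuclideanLin N) := by
    intro M N
    rw [Matrix.toEuclideanLin_eq_toLin]
    exact Matrix.toLin_mul _ _ _ M N
  have hPlPl : ∀ x, Pl (Pl x) = x := by
    intro x
    have h1 := hmul (perfectShuffle n) (perfectShuffle n)
    rw [ps_mul_ps, Matrix.toEuclideanLin_eq_toLin, Matrix.toLin_one] at h1
    have h2 := LinearMap.congr_fun h1.symm x
    rw [hPldef, Matrix.toEuclideanLin_eq_toLin]
    simpa using h2
  have hcommL : ∀ x, Pl (T x) = T (Pl x) := by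
    intro x
    have h1 := hmul (perfectShuffle n) A
    have h2 := hmul A (perfectShuffle n)
    rw [hMcomm] at h1
    rw [h2] at h1
    exact LinearMap.congr_fun h1.symm x
  -- the symmetric and antisymmetric subspaces
  set S := LinearMap.ker (Pl - LinearMap.id) with hSdef
  set W := LinearMap.ker (Pl + LinearMap.id) with hWdef
  have hSmem : ∀ x, x ∈ S ↔ Pl x = x := by
    intro x
    rw [hSdef, LinearMap.mem_ker, LinearMap.sub_apply, LinearMap.id_apply, sub_eq_zero]
  have hWmem : ∀ x, x ∈ W ↔ Pl x = -x := by
    intro x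
    rw [hWdef, LinearMap.mem_ker, LinearMap.add_apply, LinearMap.id_apply,
      add_eq_zero_iff_eq_neg]
  have hTS : ∀ x ∈ S, T x ∈ S := by
    intro x hx
    rw [hSmem] at hx ⊢
    rw [hcommL, hx]
  have hTW : ∀ x ∈ W, T x ∈ W := by
    intro x hx
    rw [hWmem] at hx ⊢
    rw [hcommL, hx, map_neg]
  have hTSr : ((T.restrict hTS)).IsSymmetric := hT.restrict_invariant hTS
  have hTWr : ((T.restrict hTW)).IsSymmetric := hT.restrict_invariant hTW
  set d1 := Module.finrank ℝ S with hd1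
  set d2 := Module.finrank ℝ W with hd2
  set bS : OrthonormalBasis (Fin d1) ℝ S := hTSr.eigenvectorBasis rfl with hbS
  set bW : OrthonormalBasis (Fin d2) ℝ W := hTWr.eigenvectorBasis rfl with hbW
  set w : Fin d1 ⊕ Fin d2 → EuclideanSpace ℝ (Fin n × Fin n) :=
    Sum.elim (fun i => ((bS i : EuclideanSpace ℝ (Fin n × Fin n))))
      (fun j => ((bW j : EuclideanSpace ℝ (Fin n × Fin n)))) with hwdef
  have hortho : ∀ x ∈ S, ∀ y ∈ W, (inner ℝ x y : ℝ) = 0 := by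
    intro x hx y hy
    rw [hSmem] at hx
    rw [hWmem] at hy
    have h1 : (inner ℝ (Pl x) y : ℝ) = inner ℝ x (Pl y) := hPsym x y
    rw [hx, hy, inner_neg_right] at h1
    linarith
  have hw_on : Orthonormal ℝ w := by
    rw [orthonormal_iff_ite]
    rintro (i | i) (j | j)
    · have h := (orthonormal_iff_ite.mp bS.orthonormal) i j
      simpa [hwdef, Submodule.coe_inner] using h
    · simp only [hwdef, Sum.elim_inl, Sum.elim_inr]
      rw [if_neg (by simp)]
      exact hortho _ (bS i).2 _ (bW j).2
    · simp only [hwdef, Sum.elim_inl, Sum.elim_inr]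
      rw [if_neg (by simp)]
      rw [real_inner_comm]
      exact hortho _ (bS j).2 _ (bW i).2
    · have h := (orthonormal_iff_ite.mp bW.orthonormal) i j
      simpa [hwdef, Submodule.coe_inner] using h
  have hSW : ∀ x : EuclideanSpace ℝ (Fin n × Fin n), x ∈ S ⊔ W := by
    intro x
    have h1 : (2⁻¹ : ℝ) • (x + Pl x) ∈ S := by
      rw [hSmem, _root_.map_smul, map_add, hPlPl, add_comm]
    have h2 : (2⁻¹ : ℝ) • (x - Pl x) ∈ W := by
      rw [hWmem, _root_.map_smul, map_sub, hPlPl, ← smul_neg, neg_sub]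
    have h3 : x = (2⁻¹ : ℝ) • (x + Pl x) + (2⁻¹ : ℝ) • (x - Pl x) := by
      module
    rw [h3]
    exact Submodule.add_mem_sup h1 h2
  have hspan : Submodule.span ℝ (Set.range w) = ⊤ := by
    rw [eq_top_iff]
    have hS_le : S ≤ Submodule.span ℝ (Set.range w) := by
      conv_lhs => rw [← Submodule.map_subtype_top S, ← bS.toBasis.span_eq,
        Submodule.map_span]
      apply Submodule.span_mono
      rintro z ⟨y, ⟨i, rfl⟩, rfl⟩
      exact ⟨Sum.inl i, by simp [hwdef]⟩
    have hW_le : W ≤ Submodule.span ℝ (Set.range w) := by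
      conv_lhs => rw [← Submodule.map_subtype_top W, ← bW.toBasis.span_eq,
        Submodule.map_span]
      apply Submodule.span_mono
      rintro z ⟨y, ⟨i, rfl⟩, rfl⟩
      exact ⟨Sum.inr i, by simp [hwdef]⟩
    intro x _
    exact (sup_le hS_le hW_le) (hSW x)
  let b : Module.Basis (Fin d1 ⊕ Fin d2) ℝ (EuclideanSpace ℝ (Fin n × Fin n)) :=
    Module.Basis.mk hw_on.linearIndependent hspan.ge
  have hcard : d1 + d2 = n * n := by
    have h1 := Module.finrank_eq_card_basis b
    rw [finrank_euclideanSpace] at h1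
    simpa [Fintype.card_sum] using h1.symm
  let e : (Fin n × Fin n) ≃ (Fin d1 ⊕ Fin d2) :=
    Fintype.equivOfCardEq (by simp [Fintype.card_sum, hcard])
  set v : (Fin n × Fin n) → (Fin n × Fin n → ℝ) :=
    fun k => (WithLp.equiv 2 _) (w (e k)) with hvdef
  -- property 1 : orthonormality as dot products
  have hv1 : ∀ k l, v k ⬝ᵥ v l = if k = l then 1 else 0 := by
    intro k l
    have h1 := orthonormal_iff_ite.mp hw_on (e k) (e l)
    calc v k ⬝ᵥ v l = (inner ℝ (w (e k)) (w (e l)) : ℝ) := by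
          simp [hvdef, dotProduct, PiLp.inner_apply, RCLike.inner_apply, conj_trivial]
          exact Finset.sum_congr rfl fun _ _ => mul_comm _ _
      _ = if e k = e l then 1 else 0 := h1
      _ = if k = l then 1 else 0 := by simp [EmbeddingLike.apply_eq_iff_eq]
  -- property 2 : spanning
  have hv2 : Submodule.span ℝ (Set.range v) = ⊤ := by
    have hr : Set.range v =
        ⇑(WithLp.linearEquiv 2 ℝ (Fin n × Fin n → ℝ)).toLinearMap '' (Set.range w) := by
      ext y
      constructor
      · rintro ⟨k, rfl⟩
        exact ⟨w (e k), ⟨e k, rfl⟩, rfl⟩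
      · rintro ⟨z, ⟨a, rfl⟩, rfl⟩
        exact ⟨e.symm a, by simp [hvdef]⟩
    rw [hr, Submodule.span_image, hspan, Submodule.map_top]
    exact LinearMap.range_eq_top.mpr (WithLp.linearEquiv 2 ℝ (Fin n × Fin n → ℝ)).surjective
  -- property 3 : eigenvectors
  have hv3' : ∀ a : Fin d1 ⊕ Fin d2, ∃ μ : ℝ, T (w a) = μ • w a := by
    rintro (i | j)
    · refine ⟨hTSr.eigenvalues rfl i, ?_⟩
      have h := hTSr.apply_eigenvectorBasis rfl i
      rw [← hbS] at h
      have h2 := congrArg (Subtype.val) h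
      rw [LinearMap.restrict_coe_apply] at h2
      simpa [hwdef] using h2
    · refine ⟨hTWr.eigenvalues rfl j, ?_⟩
      have h := hTWr.apply_eigenvectorBasis rfl j
      rw [← hbW] at h
      have h2 := congrArg (Subtype.val) h
      rw [LinearMap.restrict_coe_apply] at h2
      simpa [hwdef] using h2
  have hv3 : ∀ k, ∃ μ : ℝ, A *ᵥ v k = μ • v k := by
    intro k
    obtain ⟨μ, hμ⟩ := hv3' (e k)
    refine ⟨μ, ?_⟩
    calc A *ᵥ v k = (WithLp.equiv 2 _) (T (w (e k))) :=
          (Matrix.ofLp_toEuclideanLin_apply A (w (e k))).symm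
      _ = (WithLp.equiv 2 _) (μ • w (e k)) := by rw [hμ]
      _ = μ • v k := by simp [hvdef]
  -- property 4 : ±1 eigenvectors of the shuffle
  have hv4' : ∀ a : Fin d1 ⊕ Fin d2, Pl (w a) = w a ∨ Pl (w a) = -(w a) := by
    rintro (i | j)
    · exact Or.inl ((hSmem _).mp (bS i).2)
    · exact Or.inr ((hWmem _).mp (bW j).2)
  have hv4 : ∀ k, perfectShuffle n *ᵥ v k = v k ∨ perfectShuffle n *ᵥ v k = -(v k) := by
    intro k
    rcases hv4' (e k) with h | h
    · left
      calc perfectShuffle n *ᵥ v k = (WithLp.equiv 2 _) (Pl (w (e k))) :=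
            (Matrix.ofLp_toEuclideanLin_apply _ (w (e k))).symm
        _ = v k := by rw [h]
    · right
      calc perfectShuffle n *ᵥ v k = (WithLp.equiv 2 _) (Pl (w (e k))) :=
            (Matrix.ofLp_toEuclideanLin_apply _ (w (e k))).symm
        _ = -(v k) := by rw [h]; simp [hvdef]
  -- mutual exclusivity
  have hexcl : ∀ k, perfectShuffle n *ᵥ v k = -(v k) → ¬ (perfectShuffle n *ᵥ v k = v k) := by
    intro k h2 h1
    have h3 : v k = -(v k) := h1.symm.trans h2
    have h4 := hv1 k k
    rw [if_pos rfl] at h4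
    have h5 : v k ⬝ᵥ v k = (-(v k)) ⬝ᵥ v k := congrArg (fun z => z ⬝ᵥ v k) h3
    rw [neg_dotProduct, h4] at h5
    norm_num at h5
  -- counting via the trace of the shuffle
  set Pk : (Fin n × Fin n) → Prop := fun k => perfectShuffle n *ᵥ v k = v k with hPkdef
  set s : Finset (Fin n × Fin n) := Finset.univ.filter Pk with hsdef
  set Vm : Matrix (Fin n × Fin n) (Fin n × Fin n) ℝ := Matrix.of fun k p => v k p with hVmdef
  have hVVt : Vm * Vmᵀ = 1 := by
    ext k l
    have h := hv1 k l
    simpa [hVmdef, Matrix.mul_apply, Matrix.transpose_apply, dotProduct,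
      Matrix.one_apply] using h
  have hVtV : Vmᵀ * Vm = 1 := mul_eq_one_comm.mp hVVt
  have htr : Matrix.trace (Vm * perfectShuffle n * Vmᵀ) = n := by
    rw [Matrix.trace_mul_comm, ← Matrix.mul_assoc, hVtV, Matrix.one_mul, ps_trace]
  have hdiag : ∀ k, (Vm * perfectShuffle n * Vmᵀ) k k = v k ⬝ᵥ (perfectShuffle n *ᵥ v k) := by
    intro k
    simp only [hVmdef, Matrix.mul_apply, Matrix.transpose_apply, Matrix.of_apply,
      dotProduct, Matrix.mulVec, Finset.sum_mul, Finset.mul_sum]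
    rw [Finset.sum_comm]
    exact Finset.sum_congr rfl fun q _ => Finset.sum_congr rfl fun p _ => by ring
  have hsum : ∑ k : Fin n × Fin n, (if Pk k then (1:ℝ) else -1) = n := by
    have h0 : Matrix.trace (Vm * perfectShuffle n * Vmᵀ) =
        ∑ k : Fin n × Fin n, v k ⬝ᵥ (perfectShuffle n *ᵥ v k) :=
      Finset.sum_congr rfl fun k _ => hdiag k
    rw [h0] at htr
    rw [← htr]
    refine Finset.sum_congr rfl fun k _ => ?_
    rcases hv4 k with h | h
    · rw [if_pos h, h]
      have h4 := hv1 k k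
      rw [if_pos rfl] at h4
      exact h4.symm
    · rw [if_neg (hexcl k h), h, dotProduct_neg]
      have h4 := hv1 k k
      rw [if_pos rfl] at h4
      rw [h4]
  have hcards := Finset.card_filter_add_card_filter_not
    (s := (Finset.univ : Finset (Fin n × Fin n))) (p := Pk)
  have huniv : (Finset.univ : Finset (Fin n × Fin n)).card = n * n := by simp
  rw [huniv] at hcards
  rw [show Finset.filter Pk Finset.univ = s from rfl] at hcards
  set c2 := (Finset.univ.filter (fun k => ¬ Pk k)).card with hc2def
  have hsum2 : ∑ k : Fin n × Fin n, (if Pk k then (1:ℝ) else -1) =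
      (s.card : ℝ) - (c2 : ℝ) := by
    rw [Finset.sum_ite, Finset.sum_const, Finset.sum_const]
    simp [hsdef, hc2def, nsmul_eq_mul]
    ring
  rw [hsum2] at hsum
  have h2c1 : 2 * s.card = n * n + n := by
    have : (2 * s.card : ℝ) = (n * n + n : ℕ) := by
      push_cast
      have : (c2 : ℝ) = (n * n : ℕ) - s.card := by
        have := hcards
        push_cast [← this]
        ring
      push_cast at this
      linarith
    exact_mod_cast this
  have hnsub : n * (n - 1) = n * n - n := by
    rcases n with _ | m
    · rfl
    · rw [Nat.succ_sub_one, Nat.mul_succ, Nat.add_sub_cancel]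
  have hle : n ≤ n * n := Nat.le_mul_of_pos_left n hn
  refine ⟨v, hv1, hv2, hv3, hv4, ?_, ?_⟩
  · rw [Nat.card_eq_fintype_card]
    have hcs : Fintype.card {k : Fin n × Fin n // perfectShuffle n *ᵥ v k = v k} = s.card := by
      rw [hsdef]
      exact Fintype.card_subtype _
    rw [hcs]
    have hmul1 : n * (n + 1) = n * n + n := by ring
    rw [hmul1]
    generalize hm : n * n = m at h2c1 hcards ⊢
    omega
  · rw [Nat.card_eq_fintype_card]
    have hiff : ∀ k, (perfectShuffle n *ᵥ v k = -(v k)) ↔ ¬ Pk k := by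
      intro k
      constructor
      · exact hexcl k
      · intro h
        rcases hv4 k with h1 | h1
        · exact absurd h1 h
        · exact h1
    have hcs : Fintype.card {k : Fin n × Fin n // perfectShuffle n *ᵥ v k = -(v k)} = c2 := by
      rw [hc2def]
      rw [Fintype.card_subtype]
      congr 1
      exact Finset.filter_congr (fun k _ => by simpa using hiff k)
    rw [hcs, hnsub]
    generalize hm : n * n = m at h2c1 hcards hle ⊢
    omega
end

section
/- If A ∈ ℝ^{n²×n²} is PS-symmetric, then A admits a structured Kronecker-product expansion: there exist real scalars λ₁,…,λ_{n(n+1)/2} and μ₁,…,μ_{n(n−1)/2}, symmetric matrices B₁,…,B_{n(n+1)/2} ∈ ℝ^{n×n}, and skew-symmetric matrices C₁,…,C_{n(n−1)/2} ∈ ℝ^{n×n} such that A = Σᵢ λᵢ (Bᵢ ⊗ Bᵢ) + Σᵢ μᵢ (Cᵢ ⊗ Cᵢ), where ⊗ denotes the Kronecker product of matrices. -/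
open Matrix Kronecker
open scoped RealInnerProductSpace

namespace PSAux

variable (n : ℕ)

/-- The "transpose" involution on `ℝ^{n×n}` viewed as `EuclideanSpace`. -/
abbrev swp (p : Fin n × Fin n) : Fin n × Fin n := (p.2, p.1)

/-- Subspace of symmetric vectors. -/
def Ssub : Submodule ℝ (EuclideanSpace ℝ (Fin n × Fin n)) where
  carrier := {x | ∀ p : Fin n × Fin n, x (p.2, p.1) = x p}
  add_mem' := by
    intro x y hx hy p
    show x (p.2, p.1) + y (p.2, p.1) = x p + y p
    rw [hx p, hy p]
  zero_mem' := fun p => rfl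
  smul_mem' := by
    intro c x hx p
    show c * x (p.2, p.1) = c * x p
    rw [hx p]

/-- Subspace of skew-symmetric vectors. -/
def Ksub : Submodule ℝ (EuclideanSpace ℝ (Fin n × Fin n)) where
  carrier := {x | ∀ p : Fin n × Fin n, x (p.2, p.1) = - x p}
  add_mem' := by
    intro x y hx hy p
    show x (p.2, p.1) + y (p.2, p.1) = -(x p + y p)
    rw [hx p, hy p]; ring
  zero_mem' := fun p => by show (0:ℝ) = -0; ring
  smul_mem' := by
    intro c x hx p
    show c * x (p.2, p.1) = -(c * x p)
    rw [hx p]; ring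

lemma mem_Ssub {x : EuclideanSpace ℝ (Fin n × Fin n)} :
    x ∈ Ssub n ↔ ∀ p : Fin n × Fin n, x (p.2, p.1) = x p := Iff.rfl

lemma mem_Ksub {x : EuclideanSpace ℝ (Fin n × Fin n)} :
    x ∈ Ksub n ↔ ∀ p : Fin n × Fin n, x (p.2, p.1) = - x p := Iff.rfl

lemma inner_S_K {x y : EuclideanSpace ℝ (Fin n × Fin n)}
    (hx : x ∈ Ssub n) (hy : y ∈ Ksub n) : ⟪x, y⟫ = 0 := by
  have h : ⟪x, y⟫ = ∑ p : Fin n × Fin n, x p * y p := by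
    simp [PiLp.inner_apply]
    exact Finset.sum_congr rfl fun _ _ => mul_comm _ _
  have h2 : ∑ p : Fin n × Fin n, x p * y p
      = ∑ p : Fin n × Fin n, x (p.2, p.1) * y (p.2, p.1) :=
    Fintype.sum_equiv (Equiv.prodComm _ _) _ _ (fun p => by obtain ⟨a, b⟩ := p; rfl)
  have h3 : ∑ p : Fin n × Fin n, x (p.2, p.1) * y (p.2, p.1)
      = - ∑ p : Fin n × Fin n, x p * y p := by
    rw [← Finset.sum_neg_distrib]
    exact Finset.sum_congr rfl fun p _ => by rw [hx p, hy p]; ring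
  rw [h]
  linarith [h2.trans h3]

lemma isCompl_S_K : IsCompl (Ssub n) (Ksub n) := by
  constructor
  · rw [Submodule.disjoint_def]
    intro x hx hk
    ext p
    have h1 := hx p
    have h2 := hk p
    have : x p = (0:ℝ) := by rw [h1] at h2; linarith
    simpa using this
  · rw [codisjoint_iff, eq_top_iff]
    intro x _
    refine Submodule.mem_sup.mpr ⟨WithLp.toLp 2 (fun p => (x p + x (p.2, p.1)) / 2), ?_,
      WithLp.toLp 2 (fun p => (x p - x (p.2, p.1)) / 2), ?_, ?_⟩
    · intro p; show (x (p.2,p.1) + x ((p.2,p.1).2, (p.2,p.1).1)) / 2 = _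
      obtain ⟨a, b⟩ := p; simp; ring
    · intro p; show (x (p.2,p.1) - x ((p.2,p.1).2, (p.2,p.1).1)) / 2 = _
      obtain ⟨a, b⟩ := p; simp; ring
    · ext p
      show (x p + x (p.2,p.1)) / 2 + (x p - x (p.2,p.1)) / 2 = x p
      ring

/-- Linear equivalence between functions on `Sym2 (Fin n)` and `Ssub n`. -/
noncomputable def symEquiv : (Sym2 (Fin n) → ℝ) ≃ₗ[ℝ] Ssub n := by
  refine LinearEquiv.ofBijective
    { toFun := fun f => ⟨(WithLp.toLp 2 (fun p : Fin n × Fin n => f s(p.1, p.2)) : EuclideanSpace ℝ (Fin n × Fin n)),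
        fun p => by simp [Sym2.eq_swap]⟩
      map_add' := fun f g => rfl
      map_smul' := fun c f => rfl } ⟨?_, ?_⟩
  · intro f g hfg
    funext s
    induction s using Sym2.ind with
    | _ i j =>
      have := congrArg (fun (z : Ssub n) => (z : EuclideanSpace ℝ (Fin n × Fin n)) (i, j)) hfg
      exact this
  · rintro ⟨x, hx⟩
    refine ⟨Sym2.lift ⟨fun i j => x (i, j), fun i j => hx (j, i)⟩, ?_⟩
    apply Subtype.ext
    ext p
    obtain ⟨a, b⟩ := p
    rfl

lemma finrank_Ssub : Module.finrank ℝ (Ssub n) = n * (n + 1) / 2 := by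
  rw [← (symEquiv n).finrank_eq]
  rw [Module.finrank_fintype_fun_eq_card, Sym2.card]
  simp [Nat.choose_two_right, Fintype.card_fin, Nat.mul_comm]

lemma finrank_Ksub : Module.finrank ℝ (Ksub n) = n * (n - 1) / 2 := by
  have hc := Submodule.finrank_add_eq_of_isCompl (isCompl_S_K n)
  rw [finrank_Ssub, finrank_euclideanSpace] at hc
  simp only [Fintype.card_prod, Fintype.card_fin] at hc
  rcases Nat.eq_zero_or_pos n with h0 | hpos
  · subst h0
    norm_num at hc ⊢
    exact hc
  have e1 : 2 * (n * (n + 1) / 2) = n * n + n := by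
    rw [Nat.mul_div_cancel' (even_iff_two_dvd.mp (Nat.even_mul_succ_self n))]; ring
  have e2 : 2 * (n * (n - 1) / 2) = n * n - n := by
    have hev : Even (n * (n - 1)) := by
      rcases n with _ | m
      · simp
      · simpa [Nat.mul_comm] using Nat.even_mul_succ_self m
    rw [Nat.mul_div_cancel' (even_iff_two_dvd.mp hev)]
    rcases n with _ | m
    · simp
    · simp only [Nat.add_sub_cancel]
      have : (m + 1) * (m + 1) = (m + 1) * m + (m + 1) := by ring
      omega
  have hle : n ≤ n * n := Nat.le_mul_of_pos_left n hpos
  omega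

/-- The linear endomorphism attached to a matrix on the pair index set. -/
def Tmap (M : Matrix (Fin n × Fin n) (Fin n × Fin n) ℝ) :
    EuclideanSpace ℝ (Fin n × Fin n) →ₗ[ℝ] EuclideanSpace ℝ (Fin n × Fin n) where
  toFun x := WithLp.toLp 2 (fun p => ∑ q, M p q * x q)
  map_add' x y := PiLp.ext fun p => by
    show ∑ q, M p q * (x q + y q) = (∑ q, M p q * x q) + ∑ q, M p q * y q
    rw [← Finset.sum_add_distrib]
    exact Finset.sum_congr rfl fun q _ => by ring
  map_smul' c x := PiLp.ext fun p => by
    show ∑ q, M p q * (c * x q) = c * ∑ q, M p q * x q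
    rw [Finset.mul_sum]
    exact Finset.sum_congr rfl fun q _ => by ring

lemma Tmap_apply (M : Matrix (Fin n × Fin n) (Fin n × Fin n) ℝ)
    (x : EuclideanSpace ℝ (Fin n × Fin n)) (p : Fin n × Fin n) :
    Tmap n M x p = ∑ q, M p q * x q := rfl

variable {n}

lemma Tmap_isSymmetric {M : Matrix (Fin n × Fin n) (Fin n × Fin n) ℝ}
    (h1 : ∀ p q, M q p = M p q) : (Tmap n M).IsSymmetric := by
  intro x y
  show (inner ℝ (Tmap n M x) y : ℝ) = inner ℝ x (Tmap n M y)
  simp only [PiLp.inner_apply, RCLike.inner_apply', starRingEnd_apply, star_trivial]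
  calc ∑ p, Tmap n M x p * y p
      = ∑ p, ∑ q, M p q * x q * y p := by
        exact Finset.sum_congr rfl fun p _ => by rw [Tmap_apply, Finset.sum_mul]
    _ = ∑ q, ∑ p, M p q * x q * y p := Finset.sum_comm
    _ = ∑ q, x q * Tmap n M y q := by
        refine Finset.sum_congr rfl fun q _ => ?_
        rw [Tmap_apply, Finset.mul_sum]
        exact Finset.sum_congr rfl fun p _ => by rw [h1 p q]; ring

lemma Tmap_mem_Ssub {M : Matrix (Fin n × Fin n) (Fin n × Fin n) ℝ}
    (h2 : ∀ p q, M (p.2, p.1) (q.2, q.1) = M p q) :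
    ∀ x ∈ Ssub n, Tmap n M x ∈ Ssub n := by
  intro x hx p
  rw [Tmap_apply, Tmap_apply]
  refine Fintype.sum_equiv (Equiv.prodComm _ _) _ _ fun q => ?_
  obtain ⟨a, b⟩ := q
  simp only [Equiv.prodComm_apply, Prod.swap_prod_mk]
  rw [← h2 p (b, a), hx (b, a)]

lemma Tmap_mem_Ksub {M : Matrix (Fin n × Fin n) (Fin n × Fin n) ℝ}
    (h2 : ∀ p q, M (p.2, p.1) (q.2, q.1) = M p q) :
    ∀ x ∈ Ksub n, Tmap n M x ∈ Ksub n := by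
  intro x hx p
  rw [Tmap_apply, Tmap_apply, ← Finset.sum_neg_distrib]
  refine Fintype.sum_equiv (Equiv.prodComm _ _) _ _ fun q => ?_
  obtain ⟨a, b⟩ := q
  simp only [Equiv.prodComm_apply, Prod.swap_prod_mk]
  rw [← h2 p (b, a), hx (b, a)]
  ring

theorem key (n : ℕ) (M : Matrix (Fin n × Fin n) (Fin n × Fin n) ℝ)
    (h1 : ∀ p q, M q p = M p q)
    (h2 : ∀ p q, M (p.2, p.1) (q.2, q.1) = M p q) :
    ∃ (lam : Fin (n * (n + 1) / 2) → ℝ) (mu : Fin (n * (n - 1) / 2) → ℝ)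
      (b : Fin (n * (n + 1) / 2) → EuclideanSpace ℝ (Fin n × Fin n))
      (c : Fin (n * (n - 1) / 2) → EuclideanSpace ℝ (Fin n × Fin n)),
      (∀ i p, b i (p.2, p.1) = b i p) ∧ (∀ j p, c j (p.2, p.1) = - c j p) ∧
      ∀ p q, M p q = (∑ i, lam i * (b i p * b i q)) + ∑ j, mu j * (c j p * c j q) := by
  classical
  set T := Tmap n M with hTdef
  have hTs : T.IsSymmetric := Tmap_isSymmetric h1
  have hSinv : ∀ x ∈ Ssub n, T x ∈ Ssub n := Tmap_mem_Ssub h2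
  have hKinv : ∀ x ∈ Ksub n, T x ∈ Ksub n := Tmap_mem_Ksub h2
  have hTS : (T.restrict hSinv).IsSymmetric := hTs.restrict_invariant hSinv
  have hTK : (T.restrict hKinv).IsSymmetric := hTs.restrict_invariant hKinv
  have hfS : Module.finrank ℝ (Ssub n) = n * (n + 1) / 2 := finrank_Ssub n
  have hfK : Module.finrank ℝ (Ksub n) = n * (n - 1) / 2 := finrank_Ksub n
  set b0 := hTS.eigenvectorBasis hfS with hb0
  set lam := hTS.eigenvalues hfS with hlam
  set c0 := hTK.eigenvectorBasis hfK with hc0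
  set mu := hTK.eigenvalues hfK with hmu
  set bE : Fin (n * (n + 1) / 2) → EuclideanSpace ℝ (Fin n × Fin n) :=
    fun i => (b0 i : EuclideanSpace ℝ (Fin n × Fin n)) with hbE
  set cE : Fin (n * (n - 1) / 2) → EuclideanSpace ℝ (Fin n × Fin n) :=
    fun j => (c0 j : EuclideanSpace ℝ (Fin n × Fin n)) with hcE
  have hbmem : ∀ i, bE i ∈ Ssub n := fun i => (b0 i).2
  have hcmem : ∀ j, cE j ∈ Ksub n := fun j => (c0 j).2
  -- eigen equations
  have heb : ∀ i, T (bE i) = lam i • bE i := by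
    intro i
    have h := hTS.apply_eigenvectorBasis hfS i
    have : T (bE i) = ((T.restrict hSinv) (b0 i) : EuclideanSpace ℝ (Fin n × Fin n)) := rfl
    rw [this, h]
    rfl
  have hec : ∀ j, T (cE j) = mu j • cE j := by
    intro j
    have h := hTK.apply_eigenvectorBasis hfK j
    have : T (cE j) = ((T.restrict hKinv) (c0 j) : EuclideanSpace ℝ (Fin n × Fin n)) := rfl
    rw [this, h]
    rfl
  -- action on S
  have hTonS : ∀ y ∈ Ssub n, T y = ∑ i, (⟪bE i, y⟫ * lam i) • bE i := by
    intro y hy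
    set yS : Ssub n := ⟨y, hy⟩ with hyS
    have hrepr : ∑ i, ⟪b0 i, yS⟫ • b0 i = yS := b0.sum_repr' yS
    have hyco : y = ∑ i, ⟪bE i, y⟫ • bE i := by
      have hco := congrArg (fun z : Ssub n => (z : EuclideanSpace ℝ (Fin n × Fin n))) hrepr
      calc y = ((∑ i, ⟪b0 i, yS⟫ • b0 i : Ssub n) : EuclideanSpace ℝ (Fin n × Fin n)) := hco.symm
        _ = ∑ i, ⟪bE i, y⟫ • bE i := by
            rw [Submodule.coe_sum]
            refine Finset.sum_congr rfl fun i _ => ?_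
            rw [Submodule.coe_smul]
            congr 1
    calc T y = T (∑ i, ⟪bE i, y⟫ • bE i) := by rw [← hyco]
      _ = ∑ i, ⟪bE i, y⟫ • T (bE i) := by rw [map_sum]; exact Finset.sum_congr rfl fun i _ => T.map_smul _ _
      _ = ∑ i, (⟪bE i, y⟫ * lam i) • bE i := by
          refine Finset.sum_congr rfl fun i _ => ?_
          rw [heb i, smul_smul]
  have hTonK : ∀ y ∈ Ksub n, T y = ∑ j, (⟪cE j, y⟫ * mu j) • cE j := by
    intro y hy
    set yK : Ksub n := ⟨y, hy⟩ with hyK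
    have hrepr : ∑ j, ⟪c0 j, yK⟫ • c0 j = yK := c0.sum_repr' yK
    have hyco : y = ∑ j, ⟪cE j, y⟫ • cE j := by
      have hco := congrArg (fun z : Ksub n => (z : EuclideanSpace ℝ (Fin n × Fin n))) hrepr
      calc y = ((∑ j, ⟪c0 j, yK⟫ • c0 j : Ksub n) : EuclideanSpace ℝ (Fin n × Fin n)) := hco.symm
        _ = ∑ j, ⟪cE j, y⟫ • cE j := by
            rw [Submodule.coe_sum]
            refine Finset.sum_congr rfl fun j _ => ?_
            rw [Submodule.coe_smul]
            congr 1
    calc T y = T (∑ j, ⟪cE j, y⟫ • cE j) := by rw [← hyco]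
      _ = ∑ j, ⟪cE j, y⟫ • T (cE j) := by rw [map_sum]; exact Finset.sum_congr rfl fun j _ => T.map_smul _ _
      _ = ∑ j, (⟪cE j, y⟫ * mu j) • cE j := by
          refine Finset.sum_congr rfl fun j _ => ?_
          rw [hec j, smul_smul]
  -- the inner-product expansion
  have hinner : ∀ x y : EuclideanSpace ℝ (Fin n × Fin n),
      ⟪x, T y⟫ = (∑ i, lam i * (⟪bE i, x⟫ * ⟪bE i, y⟫)) + ∑ j, mu j * (⟪cE j, x⟫ * ⟪cE j, y⟫) := by
    intro x y
    obtain ⟨ys, hys, yk, hyk, hsum⟩ :=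
      Submodule.mem_sup.mp (by rw [(isCompl_S_K n).codisjoint.eq_top]; trivial :
        y ∈ Ssub n ⊔ Ksub n)
    have hby : ∀ i, ⟪bE i, y⟫ = ⟪bE i, ys⟫ := by
      intro i
      rw [← hsum, inner_add_right, inner_S_K n (hbmem i) hyk, add_zero]
    have hcy : ∀ j, ⟪cE j, y⟫ = ⟪cE j, yk⟫ := by
      intro j
      rw [← hsum, inner_add_right, real_inner_comm ys (cE j), inner_S_K n hys (hcmem j), zero_add]
    have hTy : T y = T ys + T yk := by rw [← hsum, map_add]
    rw [hTy, inner_add_right, hTonS ys hys, hTonK yk hyk, inner_sum, inner_sum]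
    congr 1
    · refine Finset.sum_congr rfl fun i _ => ?_
      rw [real_inner_smul_right, hby i, real_inner_comm x (bE i)]
      ring
    · refine Finset.sum_congr rfl fun j _ => ?_
      rw [real_inner_smul_right, hcy j, real_inner_comm x (cE j)]
      ring
  refine ⟨lam, mu, bE, cE, fun i p => hbmem i p, fun j p => hcmem j p, ?_⟩
  intro p q
  have hx := hinner (EuclideanSpace.single p (1:ℝ)) (EuclideanSpace.single q (1:ℝ))
  have hL : ⟪EuclideanSpace.single p (1:ℝ), T (EuclideanSpace.single q (1:ℝ))⟫ = M p q := by
    rw [EuclideanSpace.inner_single_left, hTdef, Tmap_apply]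
    simp [EuclideanSpace.single_apply]
  rw [hL] at hx
  rw [hx]
  congr 1
  · refine Finset.sum_congr rfl fun i _ => ?_
    rw [EuclideanSpace.inner_single_right, EuclideanSpace.inner_single_right]
    simp
  · refine Finset.sum_congr rfl fun j _ => ?_
    rw [EuclideanSpace.inner_single_right, EuclideanSpace.inner_single_right]
    simp


lemma shuffle_mul {n : ℕ} (M : Matrix (Fin n × Fin n) (Fin n × Fin n) ℝ)
    (p q : Fin n × Fin n) : (perfectShuffle n * M) p q = M (p.2, p.1) q := by
  rw [Matrix.mul_apply]
  rw [Finset.sum_eq_single ((p.2, p.1) : Fin n × Fin n)]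
  · simp [perfectShuffle]
  · intro r _ hr
    have : ¬(p.1 = r.2 ∧ p.2 = r.1) := by
      rintro ⟨ha, hb⟩
      exact hr (by obtain ⟨a, b⟩ := r; simp_all)
    simp [perfectShuffle, this]
  · intro h; exact absurd (Finset.mem_univ _) h

lemma mul_shuffle {n : ℕ} (M : Matrix (Fin n × Fin n) (Fin n × Fin n) ℝ)
    (p q : Fin n × Fin n) : (M * perfectShuffle n) p q = M p (q.2, q.1) := by
  rw [Matrix.mul_apply]
  rw [Finset.sum_eq_single ((q.2, q.1) : Fin n × Fin n)]
  · simp [perfectShuffle]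
  · intro r _ hr
    have : ¬(r.1 = q.2 ∧ r.2 = q.1) := by
      rintro ⟨ha, hb⟩
      exact hr (by obtain ⟨a, b⟩ := r; simp_all)
    simp [perfectShuffle, this]
  · intro h; exact absurd (Finset.mem_univ _) h

end PSAux

/-- a PS-symmetric `A` admits a structured Kronecker-product
expansion `A = Σ λᵢ (Bᵢ ⊗ Bᵢ) + Σ μᵢ (Cᵢ ⊗ Cᵢ)` with `n(n+1)/2` symmetric
matrices `Bᵢ` and `n(n−1)/2` skew-symmetric matrices `Cᵢ`.
(Since both Kronecker factors coincide, the paper's convention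
`(M ⊗ N)(i+(p−1)n, j+(q−1)n) = M(p,q)·N(i,j)` agrees entrywise with `⊗ₖ`
under the pair encoding `(i,p)` of `i+(p−1)n`.) -/
theorem psSymmetric_kronecker_expansion (n : ℕ) (hn : 0 < n)
    (A : Matrix (Fin n × Fin n) (Fin n × Fin n) ℝ)
    (hsym : A = Aᵀ) (hps : A = perfectShuffle n * A * perfectShuffle n) :
    ∃ (lam : Fin (n * (n + 1) / 2) → ℝ) (mu : Fin (n * (n - 1) / 2) → ℝ)
      (B : Fin (n * (n + 1) / 2) → Matrix (Fin n) (Fin n) ℝ)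
      (C : Fin (n * (n - 1) / 2) → Matrix (Fin n) (Fin n) ℝ),
      (∀ i, (B i)ᵀ = B i) ∧ (∀ i, (C i)ᵀ = -(C i)) ∧
      A = (∑ i, lam i • (B i ⊗ₖ B i)) + ∑ i, mu i • (C i ⊗ₖ C i) := by
  classical
  have hsym' : ∀ p q : Fin n × Fin n, A q p = A p q := by
    intro p q
    conv_lhs => rw [hsym]
    rfl
  have hps' : ∀ p q : Fin n × Fin n, A (p.2, p.1) (q.2, q.1) = A p q := by
    intro p q
    conv_rhs => rw [hps]
    rw [PSAux.mul_shuffle, PSAux.shuffle_mul]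
  set M : Matrix (Fin n × Fin n) (Fin n × Fin n) ℝ :=
    Matrix.of fun p q : Fin n × Fin n => A (p.1, q.1) (p.2, q.2) with hMdef
  have h1 : ∀ p q : Fin n × Fin n, M q p = M p q := by
    intro p q
    show A (q.1, p.1) (q.2, p.2) = A (p.1, q.1) (p.2, q.2)
    exact hps' (p.1, q.1) (p.2, q.2) ▸ rfl
  have h2 : ∀ p q : Fin n × Fin n, M (p.2, p.1) (q.2, q.1) = M p q := by
    intro p q
    show A (p.2, q.2) (p.1, q.1) = A (p.1, q.1) (p.2, q.2)
    exact hsym' (p.1, q.1) (p.2, q.2)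
  obtain ⟨lam, mu, b, c, hb, hc, hM⟩ := PSAux.key n M h1 h2
  refine ⟨lam, mu, fun i => Matrix.of fun a b' => b i (a, b'),
    fun j => Matrix.of fun a b' => c j (a, b'), ?_, ?_, ?_⟩
  · intro i
    ext a b'
    exact hb i (a, b')
  · intro j
    ext a b'
    exact hc j (a, b')
  · ext ⟨i₁, i₂⟩ ⟨j₁, j₂⟩
    have h := hM (i₁, j₁) (i₂, j₂)
    have hA : A (i₁, i₂) (j₁, j₂) = M (i₁, j₁) (i₂, j₂) := rfl
    rw [hA, h]
    simp only [Matrix.add_apply, Matrix.sum_apply, Matrix.smul_apply,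
      Matrix.kroneckerMap_apply, Matrix.of_apply, smul_eq_mul]
end
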